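/- arXiv:2308.10353 — 2 statements merged into one kernel-verified Lean document; each statement's English description precedes it below -/
import Mathlib

section
/- There exists a map u : [-1,1] → {0,1} (namely u = χ_{[0,1]}) that lies in BV_AM([-1,1] : {0,1}) with the strong bounding sequence ρ_i = i·χ_{[-1/i,0]}, but u ∉ BV([-1,1] : {0,1}): u cannot be approximated in L¹ by maps in N^{1,1}([-1,1] : {0,1}). -/
open MeasureTheory Filter Set Metric
open scoped ENNReal NNReal Topology

noncomputable section

namespace BVAMPaper

/-- A nonconstant compact rectifiable curve in `X`, parametrized by arclength on `[0, len]`. -/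
structure Curve (X : Type*) [MetricSpace X] : Type _ where
  len : ℝ
  len_pos : 0 < len
  toFun : ℝ → X
  lip : LipschitzOnWith 1 toFun (Set.Icc 0 len)
  nonconst : ∃ s ∈ Set.Icc (0:ℝ) len, ∃ t ∈ Set.Icc (0:ℝ) len, toFun s ≠ toFun t

variable {X : Type*} [MetricSpace X]

/-- The line integral `∫_γ ρ ds` of `ρ` over the arclength-parametrized curve `γ`. -/
def Curve.integral (γ : Curve X) (ρ : X → ℝ≥0∞) : ℝ≥0∞ :=
  ∫⁻ t in Set.Icc 0 γ.len, ρ (γ.toFun t)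

/-- The line integral of `ρ` over the subcurve `γ|_{[s,t]}`. -/
def Curve.integralOn (γ : Curve X) (s t : ℝ) (ρ : X → ℝ≥0∞) : ℝ≥0∞ :=
  ∫⁻ r in Set.Icc s t, ρ (γ.toFun r)

variable [MeasurableSpace X]

/-- The 1-modulus of a family of curves. -/
def Mod1 (μ : Measure X) (Γ : Set (Curve X)) : ℝ≥0∞ :=
  ⨅ (ρ : X → ℝ≥0∞) (_ : Measurable ρ ∧ ∀ γ ∈ Γ, 1 ≤ Curve.integral γ ρ), ∫⁻ x, ρ x ∂μ

/-- A sequence admissible for the AM-modulus of `Γ`. -/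
def AMAdmissible (Γ : Set (Curve X)) (ρ : ℕ → X → ℝ≥0∞) : Prop :=
  (∀ i, Measurable (ρ i)) ∧
    ∀ γ ∈ Γ, 1 ≤ Filter.atTop.liminf fun i => Curve.integral γ (ρ i)

/-- The AM-modulus of a family of curves. -/
def AM (μ : Measure X) (Γ : Set (Curve X)) : ℝ≥0∞ :=
  ⨅ (ρ : ℕ → X → ℝ≥0∞) (_ : AMAdmissible Γ ρ),
    Filter.atTop.liminf fun i => ∫⁻ x, ρ i x ∂μ

section Target
variable {Y : Type*} [EMetricSpace Y]

/-- `g` is an upper gradient of `u`. -/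
def IsUpperGradient (u : X → Y) (g : X → ℝ≥0∞) : Prop :=
  ∀ γ : Curve X, edist (u (γ.toFun γ.len)) (u (γ.toFun 0)) ≤ Curve.integral γ g

/-- `(ρ i)` is an AM-bounding sequence for `u` relative to the set `U`. -/
def AMBoundingOn (μ : Measure X) (U : Set X) (u : X → Y) (ρ : ℕ → X → ℝ≥0∞) : Prop :=
  (∀ i, Measurable (ρ i)) ∧
    ∃ Γ : Set (Curve X), AM μ Γ = 0 ∧
      ∀ γ : Curve X, γ ∉ Γ → (∀ r ∈ Set.Icc (0:ℝ) γ.len, γ.toFun r ∈ U) →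
        ∃ N : Set ℝ, volume N = 0 ∧
          ∀ s t : ℝ, s ∈ Set.Icc (0:ℝ) γ.len → t ∈ Set.Icc (0:ℝ) γ.len →
            s ∉ N → t ∉ N → s < t →
              edist (u (γ.toFun s)) (u (γ.toFun t)) ≤
                Filter.atTop.liminf fun i => Curve.integralOn γ s t (ρ i)

/-- `(ρ i)` is an AM-bounding sequence for `u`. -/
def AMBounding (μ : Measure X) (u : X → Y) (ρ : ℕ → X → ℝ≥0∞) : Prop :=
  AMBoundingOn μ Set.univ u ρ

/-- A strong bounding sequence: the bounding inequality holds along every nonconstant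
compact rectifiable curve, with no exceptional curve family. -/
def StrongBounding (u : X → Y) (ρ : ℕ → X → ℝ≥0∞) : Prop :=
  (∀ i, Measurable (ρ i)) ∧
    ∀ γ : Curve X, ∃ N : Set ℝ, volume N = 0 ∧
      ∀ s t : ℝ, s ∈ Set.Icc (0:ℝ) γ.len → t ∈ Set.Icc (0:ℝ) γ.len →
        s ∉ N → t ∉ N → s < t →
          edist (u (γ.toFun s)) (u (γ.toFun t)) ≤
            Filter.atTop.liminf fun i => Curve.integralOn γ s t (ρ i)

/-- The AM-BV energy of `u` relative to the set `U`. -/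
def DAMOn (μ : Measure X) (u : X → Y) (U : Set X) : ℝ≥0∞ :=
  ⨅ (ρ : ℕ → X → ℝ≥0∞) (_ : AMBoundingOn μ U u ρ),
    Filter.atTop.liminf fun i => ∫⁻ x in U, ρ i x ∂μ

/-- The total AM-BV energy `‖D_AM u‖(X)`. -/
def DAM (μ : Measure X) (u : X → Y) : ℝ≥0∞ := DAMOn μ u Set.univ

/-- `‖D_AM u‖(A)` for a general set `A`, via approximation by open supersets. -/
def DAMmeas (μ : Measure X) (u : X → Y) (A : Set X) : ℝ≥0∞ :=
  ⨅ (U : Set X) (_ : IsOpen U ∧ A ⊆ U), DAMOn μ u U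

/-- `u ∈ L¹(X : Y)`. -/
def MemL1 (μ : Measure X) (u : X → Y) : Prop :=
  AEStronglyMeasurable u μ ∧ ∃ y₀ : Y, ∫⁻ x, edist (u x) y₀ ∂μ < ∞

/-- `u ∈ BV_AM(X : Y)`. -/
def MemBVAM (μ : Measure X) (u : X → Y) : Prop :=
  MemL1 μ u ∧ ∃ ρ : ℕ → X → ℝ≥0∞, AMBounding μ u ρ ∧
    (Filter.atTop.liminf fun i => ∫⁻ x, ρ i x ∂μ) < ∞

/-- `u ∈ N^{1,1}(X : Y)`. -/
def MemN11 (μ : Measure X) (u : X → Y) : Prop :=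
  MemL1 μ u ∧ ∃ g : X → ℝ≥0∞, Measurable g ∧ IsUpperGradient u g ∧ ∫⁻ x, g x ∂μ < ∞

/-- The relaxed BV energy `‖Du‖(X)` of `u`, via approximation in `L¹` by
Newton–Sobolev maps with their upper gradients. -/
def DBV (μ : Measure X) (u : X → Y) : ℝ≥0∞ :=
  ⨅ (v : ℕ → X → Y) (g : ℕ → X → ℝ≥0∞)
    (_ : (∀ k, MemL1 μ (v k) ∧ Measurable (g k) ∧ IsUpperGradient (v k) (g k)) ∧
        Tendsto (fun k => ∫⁻ x, edist (v k x) (u x) ∂μ) atTop (nhds 0)),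
    Filter.atTop.liminf fun k => ∫⁻ x, g k x ∂μ

/-- `u ∈ BV(X : Y)` via relaxation. -/
def MemBV (μ : Measure X) (u : X → Y) : Prop := MemL1 μ u ∧ DBV μ u < ∞

/-- The pointwise (upper) Lipschitz constant function. -/
def lipDeriv (u : X → Y) (x : X) : ℝ≥0∞ :=
  Filter.limsup (fun y => edist (u y) (u x) / edist y x) (𝓝[≠] x)

end Target

/-- `μ` is a doubling measure with constant `Cd`. -/
def Doubling (μ : Measure X) (Cd : ℝ≥0) : Prop :=
  ∀ (x : X) (r : ℝ), 0 < r →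
    0 < μ (ball x r) ∧ μ (ball x (2 * r)) ≤ Cd * μ (ball x r) ∧ μ (ball x (2 * r)) < ∞

/-- `X` supports a 1-Poincaré inequality with constants `C`, `lam`. -/
def Poincare (μ : Measure X) (C lam : ℝ) : Prop :=
  ∀ (f : X → ℝ) (g : X → ℝ≥0∞), LocallyIntegrable f μ → Measurable g → IsUpperGradient f g →
    ∀ (x : X) (r : ℝ), 0 < r →
      (μ (ball x r))⁻¹ * ∫⁻ y in ball x r, (‖f y - ⨍ z in ball x r, f z ∂μ‖₊ : ℝ≥0∞) ∂μ ≤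
        ENNReal.ofReal (C * r) *
          ((μ (ball x (lam * r)))⁻¹ * ∫⁻ y in ball x (lam * r), g y ∂μ)

/-- `X` supports an AM-Poincaré inequality for `V`-valued maps. -/
def AMPoincare (μ : Measure X) (V : Type*) [NormedAddCommGroup V] [NormedSpace ℝ V]
    (C lam : ℝ) : Prop :=
  ∀ (u : X → V) (ρ : ℕ → X → ℝ≥0∞), MemBVAM μ u → AMBounding μ u ρ →
    ∀ (x : X) (r : ℝ), 0 < r →
      (μ (ball x r))⁻¹ * ∫⁻ y in ball x r, (‖u y - ⨍ z in ball x r, u z ∂μ‖₊ : ℝ≥0∞) ∂μ ≤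
        ENNReal.ofReal (C * r) *
          Filter.atTop.liminf fun i =>
            (μ (ball x (lam * r)))⁻¹ * ∫⁻ y in ball x (lam * r), ρ i y ∂μ

section MetricTarget
variable {Y : Type*} [MetricSpace Y]

/-- `u` is approximately continuous at `x`. -/
def ApproxCont (μ : Measure X) (u : X → Y) (x : X) : Prop :=
  ∃ y : Y, ∀ ε : ℝ, 0 < ε →
    Filter.limsup (fun r => μ (ball x r \ u ⁻¹' ball y ε) / μ (ball x r)) (𝓝[>] (0:ℝ)) = 0

/-- The jump set of `u`: points where `u` fails to be approximately continuous. -/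
def jumpSet (μ : Measure X) (u : X → Y) : Set X := {x | ¬ ApproxCont μ u x}

end MetricTarget

/-- The codimension-one Hausdorff measure of `A` relative to `μ`. -/
def codimOne (μ : Measure X) (A : Set X) : ℝ≥0∞ :=
  ⨆ (δ : ℝ) (_ : 0 < δ),
    ⨅ (c : ℕ → X) (r : ℕ → ℝ)
      (_ : (∀ i, 0 < r i ∧ r i ≤ δ) ∧ A ⊆ ⋃ i, ball (c i) (r i)),
      ∑' i, μ (ball (c i) (r i)) / ENNReal.ofReal (r i)


/-- The domain `[-1,1]` with Lebesgue measure. -/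
def I13 : Type := Set.Icc (-1 : ℝ) 1

instance : MetricSpace I13 := by unfold I13; infer_instance
instance : MeasurableSpace I13 := by unfold I13; infer_instance

def μ13 : Measure I13 := Measure.comap Subtype.val volume

/-- The target `{0,1} ⊂ ℝ`. -/
def Y13 : Type := ({0, 1} : Set ℝ)

instance : MetricSpace Y13 := by unfold Y13; infer_instance

/-- `u = χ_{[0,1]}`, viewed as a map `[-1,1] → {0,1}`. -/
def u13 : I13 → Y13 := fun x =>
  if (0 : ℝ) ≤ (show Set.Icc (-1:ℝ) 1 from x).1 then ⟨1, by simp⟩ else ⟨0, by simp⟩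

/-- `ρ_i = i · χ_{[-1/i, 0]}`. -/
def ρ13 : ℕ → I13 → ℝ≥0∞ := fun i x =>
  if -(1 / (i : ℝ)) ≤ (show Set.Icc (-1:ℝ) 1 from x).1 ∧
      (show Set.Icc (-1:ℝ) 1 from x).1 ≤ 0 then (i : ℝ≥0∞) else 0


-- ===================== auxiliary lemmas =====================

section Aux

lemma I13.one_le : ((-1:ℝ)) ≤ 1 := by norm_num

/-- Projection onto the interval. -/
def pI : ℝ → I13 := fun x => Set.projIcc (-1) 1 I13.one_le x

lemma pI_of_mem {x : ℝ} (hx : x ∈ Set.Icc (-1:ℝ) 1) : (pI x).1 = x := by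
  simp [pI, Set.projIcc_of_mem I13.one_le hx]

lemma measEmb13 : MeasurableEmbedding (Subtype.val : I13 → ℝ) :=
  MeasurableEmbedding.subtype_coe measurableSet_Icc

lemma range_val13 : Set.range (Subtype.val : I13 → ℝ) = Set.Icc (-1:ℝ) 1 :=
  Subtype.range_coe

lemma mem13 (x : I13) : (x.1 : ℝ) ∈ Set.Icc (-1:ℝ) 1 :=
  (show Set.Icc (-1:ℝ) 1 from x).2

lemma memY (y : Y13) : (y.1 : ℝ) = 0 ∨ (y.1 : ℝ) = 1 :=
  (show ({0,1} : Set ℝ) from y).2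

lemma Y13.edist_le_one (a b : Y13) : edist a b ≤ 1 := by
  have : edist a b = ENNReal.ofReal |a.1 - b.1| := by
    rw [edist_dist]
    congr 1
  rw [this]
  rcases memY a with h1 | h1 <;> rcases memY b with h2 | h2 <;>
    simp [h1, h2] <;> norm_num

lemma Y13.edist_of_ne {a b : Y13} (h : a ≠ b) : edist a b = 1 := by
  have hv : a.1 ≠ b.1 := fun hh => h (Subtype.ext hh)
  have : edist a b = ENNReal.ofReal |a.1 - b.1| := by
    rw [edist_dist]
    congr 1
  rw [this]
  rcases memY a with h1 | h1 <;> rcases memY b with h2 | h2 <;>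
    first
      | (exact absurd (h1.trans h2.symm) hv)
      | (simp [h1, h2] <;> norm_num)

lemma measSet13 {s : Set ℝ} (hs : MeasurableSet s) :
    MeasurableSet {x : I13 | x.1 ∈ s} := by
  have : {x : I13 | x.1 ∈ s} = (Subtype.val : I13 → ℝ) ⁻¹' s := rfl
  rw [this]
  exact measEmb13.measurable hs

lemma meas_ρ13 (i : ℕ) : Measurable (ρ13 i) := by
  unfold ρ13
  exact Measurable.ite
    (measSet13 (s := Set.Icc (-(1/(i:ℝ))) 0) measurableSet_Icc)
    measurable_const measurable_const

lemma u13_apply (x : I13) : u13 x = if (0:ℝ) ≤ x.1 then ⟨1, by simp⟩ else ⟨0, by simp⟩ := rfl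

lemma sm_u13 : StronglyMeasurable u13 := by
  unfold u13
  exact StronglyMeasurable.ite
    (measSet13 (s := Set.Ici 0) measurableSet_Ici)
    stronglyMeasurable_const stronglyMeasurable_const

lemma μ13_apply (s : Set I13) : μ13 s = volume (Subtype.val '' s) :=
  measEmb13.comap_apply volume s

lemma μ13_univ : μ13 Set.univ = 2 := by
  rw [μ13_apply]
  refine (congrArg volume (Set.image_univ.trans range_val13)).trans ?_
  rw [Real.volume_Icc]
  norm_num

end Aux


section Cross

lemma crossing {f : ℝ → ℝ} {p q ε : ℝ} (hpq : p ≤ q)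
    (hc : ContinuousOn f (Set.Icc p q))
    (hfp : f p ≤ -ε) (hfq : 0 ≤ f q) :
    ∃ a b, p ≤ a ∧ a ≤ b ∧ b ≤ q ∧ f a ≤ -ε ∧ 0 ≤ f b ∧
      ∀ r ∈ Set.Ioo a b, -ε ≤ f r ∧ f r ≤ 0 := by
  set A : Set ℝ := Set.Icc p q ∩ f ⁻¹' Set.Iic (-ε) with hA
  have hAc : IsClosed A := hc.preimage_isClosed_of_isClosed isClosed_Icc isClosed_Iic
  have hAne : A.Nonempty := ⟨p, ⟨le_refl p, hpq⟩, hfp⟩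
  have hAbdd : BddAbove A := ⟨q, fun x hx => hx.1.2⟩
  set a := sSup A with ha
  have haA : a ∈ A := hAc.csSup_mem hAne hAbdd
  have hap : p ≤ a := haA.1.1
  have haq : a ≤ q := haA.1.2
  set B : Set ℝ := Set.Icc a q ∩ f ⁻¹' Set.Ici 0 with hB
  have hBc : IsClosed B :=
    (hc.mono (Set.Icc_subset_Icc hap le_rfl)).preimage_isClosed_of_isClosed isClosed_Icc isClosed_Ici
  have hBne : B.Nonempty := ⟨q, ⟨haq, le_rfl⟩, hfq⟩
  have hBbdd : BddBelow B := ⟨a, fun x hx => hx.1.1⟩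
  set b := sInf B with hb
  have hbB : b ∈ B := hBc.csInf_mem hBne hBbdd
  refine ⟨a, b, hap, hbB.1.1, hbB.1.2, haA.2, hbB.2, fun r hr => ⟨?_, ?_⟩⟩
  · by_contra h
    push_neg at h
    have hrA : r ∈ A := ⟨⟨hap.trans hr.1.le, hr.2.le.trans hbB.1.2⟩, h.le⟩
    exact absurd (le_csSup hAbdd hrA) (not_le.2 hr.1)
  · by_contra h
    push_neg at h
    have hrB : r ∈ B := ⟨⟨hr.1.le, hr.2.le.trans hbB.1.2⟩, h.le⟩
    exact absurd (csInf_le hBbdd hrB) (not_le.2 hr.2)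

lemma cross_interval {f : ℝ → ℝ} {s t ε : ℝ} (hst : s ≤ t)
    (hc : ContinuousOn f (Set.Icc s t))
    (hL : ∀ x ∈ Set.Icc s t, ∀ y ∈ Set.Icc s t, |f x - f y| ≤ |x - y|)
    (hor : (f s ≤ -ε ∧ 0 ≤ f t) ∨ (f t ≤ -ε ∧ 0 ≤ f s)) :
    ∃ a b, Set.Ioo a b ⊆ Set.Icc s t ∧ ε ≤ b - a ∧
      ∀ r ∈ Set.Ioo a b, -ε ≤ f r ∧ f r ≤ 0 := by
  rcases hor with ⟨h1, h2⟩ | ⟨h1, h2⟩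
  · obtain ⟨a, b, hsa, hab, hbt, hfa, hfb, hmem⟩ := crossing hst hc h1 h2
    have haI : a ∈ Set.Icc s t := ⟨hsa, hab.trans hbt⟩
    have hbI : b ∈ Set.Icc s t := ⟨hsa.trans hab, hbt⟩
    have hlip := hL a haI b hbI
    refine ⟨a, b, fun r hr => ⟨hsa.trans hr.1.le, hr.2.le.trans hbt⟩, ?_, hmem⟩
    have h3 : |a - b| = b - a := by rw [abs_sub_comm, abs_of_nonneg (by linarith)]
    rw [h3] at hlip; linarith [abs_nonneg (f a - f b), neg_le_abs (f a - f b)]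
  · set g : ℝ → ℝ := fun r => f (s + t - r) with hg
    have hmap : ∀ r ∈ Set.Icc s t, s + t - r ∈ Set.Icc s t := by
      intro r hr; exact ⟨by linarith [hr.2], by linarith [hr.1]⟩
    have hgc : ContinuousOn g (Set.Icc s t) :=
      hc.comp (Continuous.continuousOn (by continuity)) hmap
    have hgs : g s ≤ -ε := by simpa [hg] using h1
    have hgt : 0 ≤ g t := by simpa [hg] using h2
    obtain ⟨a, b, hsa, hab, hbt, hga, hgb, hmem⟩ := crossing hst hgc hgs hgt
    refine ⟨s + t - b, s + t - a,
      fun r hr => ⟨by linarith [hr.1, hbt], by linarith [hr.2, hsa]⟩, ?_, ?_⟩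
    · have haI : a ∈ Set.Icc s t := ⟨hsa, hab.trans hbt⟩
      have hbI : b ∈ Set.Icc s t := ⟨hsa.trans hab, hbt⟩
      have hlip := hL (s + t - a) (hmap a haI) (s + t - b) (hmap b hbI)
      have h3 : |(s + t - a) - (s + t - b)| = b - a := by
        rw [show (s + t - a) - (s + t - b) = b - a by ring, abs_of_nonneg (by linarith)]
      rw [h3] at hlip
      have h4 := neg_le_abs (f (s + t - a) - f (s + t - b))
      have hga' : f (s + t - a) ≤ -ε := hga
      have hgb' : 0 ≤ f (s + t - b) := hgb
      linarith
    · intro r hr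
      have hrr : s + t - r ∈ Set.Ioo a b := ⟨by linarith [hr.2], by linarith [hr.1]⟩
      have := hmem _ hrr
      simpa [hg, show s + t - (s + t - r) = r by ring] using this

lemma key_interval (γ : Curve I13) {s t a b : ℝ} {i : ℕ} (hi : 1 ≤ i)
    (hIoo : Set.Ioo a b ⊆ Set.Icc s t) (hba : 1/(i:ℝ) ≤ b - a)
    (hmem : ∀ r ∈ Set.Ioo a b, -(1/(i:ℝ)) ≤ (γ.toFun r).1 ∧ (γ.toFun r).1 ≤ 0) :
    1 ≤ Curve.integralOn γ s t (ρ13 i) := by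
  have h0 : ∫⁻ r in Set.Ioo a b, ρ13 i (γ.toFun r) = ∫⁻ _ in Set.Ioo a b, (i:ℝ≥0∞) := by
    refine setLIntegral_congr_fun measurableSet_Ioo (fun r hr => ?_)
    have h := hmem r hr
    simp only [ρ13]
    exact if_pos h
  have h1 : (i:ℝ≥0∞) * ENNReal.ofReal (b - a) ≤ Curve.integralOn γ s t (ρ13 i) := by
    unfold Curve.integralOn
    calc (i:ℝ≥0∞) * ENNReal.ofReal (b - a)
        = (i:ℝ≥0∞) * volume (Set.Ioo a b) := by rw [Real.volume_Ioo]
      _ = ∫⁻ _ in Set.Ioo a b, (i:ℝ≥0∞) := by rw [setLIntegral_const]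
      _ = ∫⁻ r in Set.Ioo a b, ρ13 i (γ.toFun r) := h0.symm
      _ ≤ ∫⁻ r in Set.Icc s t, ρ13 i (γ.toFun r) := lintegral_mono_set hIoo
  refine le_trans ?_ h1
  have hipos : (0:ℝ) < (i:ℝ) := by exact_mod_cast hi
  calc (1:ℝ≥0∞) = (i:ℝ≥0∞) * (i:ℝ≥0∞)⁻¹ :=
        (ENNReal.mul_inv_cancel (by exact_mod_cast Nat.pos_of_ne_zero (by omega) |>.ne')
          (ENNReal.natCast_ne_top i)).symm
    _ = (i:ℝ≥0∞) * ENNReal.ofReal (1/(i:ℝ)) := by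
        rw [one_div, ENNReal.ofReal_inv_of_pos hipos, ENNReal.ofReal_natCast]
    _ ≤ (i:ℝ≥0∞) * ENNReal.ofReal (b - a) :=
        mul_le_mul_right (ENNReal.ofReal_le_ofReal hba) _

lemma strong_key (γ : Curve I13) {s t : ℝ} (hs : s ∈ Set.Icc 0 γ.len)
    (ht : t ∈ Set.Icc 0 γ.len) (hst : s < t)
    (hne : u13 (γ.toFun s) ≠ u13 (γ.toFun t)) :
    1 ≤ Filter.atTop.liminf fun i => Curve.integralOn γ s t (ρ13 i) := by
  set f : ℝ → ℝ := fun r => (γ.toFun r).1 with hf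
  have hsub : Set.Icc s t ⊆ Set.Icc 0 γ.len := Set.Icc_subset_Icc hs.1 ht.2
  have hc : ContinuousOn f (Set.Icc s t) :=
    continuous_subtype_val.comp_continuousOn ((γ.lip.continuousOn).mono hsub)
  have hL : ∀ x ∈ Set.Icc s t, ∀ y ∈ Set.Icc s t, |f x - f y| ≤ |x - y| := by
    intro x hx y hy
    have h := γ.lip.dist_le_mul x (hsub hx) y (hsub hy)
    change dist (f x) (f y) ≤ _ at h
    simpa [Real.dist_eq] using h
  have hor : (f s < 0 ∧ 0 ≤ f t) ∨ (f t < 0 ∧ 0 ≤ f s) := by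
    by_cases h1 : 0 ≤ f s <;> by_cases h2 : 0 ≤ f t
    · exact absurd (by simp only [u13]; exact (if_pos h1).trans (if_pos h2).symm) hne
    · exact Or.inr ⟨not_le.1 h2, h1⟩
    · exact Or.inl ⟨not_le.1 h1, h2⟩
    · exact absurd (by simp only [u13]; exact (if_neg h1).trans (if_neg h2).symm) hne
  obtain ⟨ε₀, hε₀, hcase⟩ :
      ∃ ε₀ > 0, ∀ ε, ε ≤ ε₀ → (f s ≤ -ε ∧ 0 ≤ f t) ∨ (f t ≤ -ε ∧ 0 ≤ f s) := by
    rcases hor with ⟨h1, h2⟩ | ⟨h1, h2⟩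
    · exact ⟨-f s, by linarith, fun ε hε => Or.inl ⟨by linarith, h2⟩⟩
    · exact ⟨-f t, by linarith, fun ε hε => Or.inr ⟨by linarith, h2⟩⟩
  obtain ⟨n, hn⟩ := exists_nat_one_div_lt hε₀
  refine Filter.le_liminf_of_le (by isBoundedDefault) ?_
  refine Filter.eventually_atTop.2 ⟨n + 1, fun i hi => ?_⟩
  have hi1 : 1 ≤ i := le_trans (Nat.le_add_left 1 n) hi
  have hipos : (0:ℝ) < (i:ℝ) := by exact_mod_cast hi1
  have hεi : 1/(i:ℝ) ≤ ε₀ := by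
    have h1 : 1/(i:ℝ) ≤ 1/((n:ℝ)+1) := by
      apply one_div_le_one_div_of_le (by positivity)
      exact_mod_cast hi
    linarith
  obtain ⟨a, b, hIoo, hba, hmem⟩ := cross_interval hst.le hc hL (hcase _ hεi)
  exact key_interval γ hi1 hIoo hba hmem

end Cross


section Part12

lemma strongBounding13 : StrongBounding u13 ρ13 := by
  refine ⟨meas_ρ13, fun γ => ⟨∅, measure_empty, fun s t hs ht _ _ hst => ?_⟩⟩
  by_cases hne : u13 (γ.toFun s) = u13 (γ.toFun t)
  · rw [hne, edist_self]
    exact zero_le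
  · rw [Y13.edist_of_ne hne]
    exact strong_key γ hs ht hst hne

lemma AM_empty : AM μ13 (∅ : Set (Curve I13)) = 0 := by
  refine le_antisymm ?_ zero_le
  have hadm : AMAdmissible (∅ : Set (Curve I13)) (fun _ _ => 0) :=
    ⟨fun _ => measurable_const, fun γ hγ => absurd hγ (Set.notMem_empty γ)⟩
  refine le_trans (iInf₂_le (fun _ _ => (0:ℝ≥0∞)) hadm) ?_
  simp [Filter.liminf_const]

lemma amBounding13 : AMBounding μ13 u13 ρ13 := by
  refine ⟨meas_ρ13, ∅, AM_empty, fun γ _ _ => ?_⟩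
  obtain ⟨_, h⟩ := strongBounding13
  exact h γ

lemma memL1_u13 : MemL1 μ13 u13 := by
  refine ⟨sm_u13.aestronglyMeasurable, ⟨0, by simp⟩, ?_⟩
  calc ∫⁻ x, edist (u13 x) ⟨0, by simp⟩ ∂μ13 ≤ ∫⁻ _, 1 ∂μ13 :=
        lintegral_mono fun x => Y13.edist_le_one _ _
    _ = μ13 Set.univ := by simp
    _ < ⊤ := by rw [μ13_univ]; norm_num

lemma lint_ρ13_le (i : ℕ) (hi : 1 ≤ i) : ∫⁻ x, ρ13 i x ∂μ13 ≤ 1 := by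
  set E : Set I13 := {x : I13 | x.1 ∈ Set.Icc (-(1/(i:ℝ))) 0} with hE
  have hEm : MeasurableSet E := measSet13 measurableSet_Icc
  have h0 : ∀ x, ρ13 i x = E.indicator (fun _ => (i:ℝ≥0∞)) x := by
    intro x
    simp only [ρ13, Set.indicator_apply, hE, Set.mem_setOf_eq, Set.mem_Icc]
  have h1 : ∫⁻ x, ρ13 i x ∂μ13 = (i:ℝ≥0∞) * μ13 E := by
    simp_rw [h0]
    rw [lintegral_indicator hEm, setLIntegral_const]
  rw [h1]
  have h2 : μ13 E ≤ ENNReal.ofReal (1/(i:ℝ)) := by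
    rw [μ13_apply]
    have him : Subtype.val '' E ⊆ Set.Icc (-(1/(i:ℝ))) 0 := by
      intro z hz
      obtain ⟨x, hx, rfl⟩ := hz
      exact hx
    refine le_trans (measure_mono him) ?_
    rw [Real.volume_Icc]
    apply le_of_eq
    congr 1
    ring
  have hipos : (0:ℝ) < (i:ℝ) := by exact_mod_cast hi
  calc (i:ℝ≥0∞) * μ13 E ≤ (i:ℝ≥0∞) * ENNReal.ofReal (1/(i:ℝ)) :=
        mul_le_mul_right h2 _
    _ = (i:ℝ≥0∞) * (i:ℝ≥0∞)⁻¹ := by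
        rw [one_div, ENNReal.ofReal_inv_of_pos hipos, ENNReal.ofReal_natCast]
    _ = 1 := ENNReal.mul_inv_cancel
        (by exact_mod_cast Nat.pos_of_ne_zero (by omega) |>.ne')
        (ENNReal.natCast_ne_top i)

lemma memBVAM13 : MemBVAM μ13 u13 := by
  refine ⟨memL1_u13, ρ13, amBounding13, ?_⟩
  have h : Filter.atTop.liminf (fun i => ∫⁻ x, ρ13 i x ∂μ13) ≤ 1 := by
    refine Filter.liminf_le_of_frequently_le ?_ (by isBoundedDefault)
    exact ((Filter.eventually_atTop.2 ⟨1, fun i hi => lint_ρ13_le i hi⟩).frequently)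
  exact lt_of_le_of_lt h (by norm_num)

end Part12


section Part3

/-- Extension of a density on `I13` to `ℝ` by zero. -/
def G13 (g : I13 → ℝ≥0∞) : ℝ → ℝ≥0∞ :=
  (Set.Icc (-1:ℝ) 1).indicator (fun x => g (pI x))

lemma G13_total (g : I13 → ℝ≥0∞) : ∫⁻ x, G13 g x ∂volume = ∫⁻ x, g x ∂μ13 := by
  unfold G13
  rw [lintegral_indicator measurableSet_Icc]
  have h1 : volume.restrict (Set.Icc (-1:ℝ) 1) = Measure.map (Subtype.val : I13 → ℝ) μ13 := by
    unfold μ13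
    exact ((measEmb13.map_comap volume).trans (congrArg (Measure.restrict volume) range_val13)).symm
  rw [h1]
  erw [measEmb13.lintegral_map]
  refine lintegral_congr fun x => ?_
  congr 1
  exact Subtype.ext (pI_of_mem (mem13 x))

/-- A straight segment from `p` to `q` inside `[-1,1]`, as a curve. -/
def seg (p q : ℝ) (hpq : p < q) (hp : -1 ≤ p) (hq : q ≤ 1) : Curve I13 where
  len := q - p
  len_pos := by linarith
  toFun := fun r => pI (p + r)
  lip := by
    have h1 : LipschitzWith 1 (fun r : ℝ => p + r) :=
      LipschitzWith.of_dist_le_mul fun x y => by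
        rw [Real.dist_eq, Real.dist_eq, show p + x - (p + y) = x - y by ring]
        simp
    have h2 := (LipschitzWith.projIcc I13.one_le).comp h1
    rw [mul_one] at h2
    intro a _ b _
    exact h2 a b
  nonconst := by
    refine ⟨0, ⟨le_rfl, by linarith⟩, q - p, ⟨by linarith, le_rfl⟩, fun h => ?_⟩
    have h0 : (pI (p + 0)).1 = p := by rw [add_zero]; exact pI_of_mem ⟨hp, by linarith⟩
    have h1 : (pI (p + (q - p))).1 = q := by
      rw [show p + (q - p) = q by ring]; exact pI_of_mem ⟨by linarith, hq⟩
    have h2 := congrArg Subtype.val h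
    rw [h0, h1] at h2
    linarith

lemma ug_interval {w : I13 → Y13} {g : I13 → ℝ≥0∞} (hug : IsUpperGradient w g)
    {p q : ℝ} (hp : -1 ≤ p) (hq : q ≤ 1) (hpq : p < q)
    (hw : w (pI p) ≠ w (pI q)) :
    1 ≤ ∫⁻ x in Set.Icc p q, G13 g x ∂volume := by
  have h1 := hug (seg p q hpq hp hq)
  have h0 : (seg p q hpq hp hq).toFun 0 = pI p := by
    show pI (p + 0) = pI p
    rw [add_zero]
  have hlen : (seg p q hpq hp hq).toFun (seg p q hpq hp hq).len = pI q := by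
    show pI (p + (q - p)) = pI q
    rw [show p + (q - p) = q by ring]
  rw [h0, hlen, Y13.edist_of_ne (Ne.symm hw)] at h1
  refine le_trans h1 (le_of_eq ?_)
  unfold Curve.integral
  have e : ∀ r ∈ Set.Icc (0:ℝ) ((seg p q hpq hp hq).len),
      g ((seg p q hpq hp hq).toFun r) = G13 g (p + r) := by
    intro r hr
    have hr' : r ∈ Set.Icc (0:ℝ) (q - p) := hr
    have hm : p + r ∈ Set.Icc (-1:ℝ) 1 := ⟨by linarith [hr'.1], by linarith [hr'.2]⟩
    unfold G13
    rw [Set.indicator_of_mem hm]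
    rfl
  rw [setLIntegral_congr_fun measurableSet_Icc e]
  have emb : MeasurableEmbedding (fun r : ℝ => p + r) :=
    (Homeomorph.addLeft p).measurableEmbedding
  have hmap : Measure.map (fun r : ℝ => p + r) (volume.restrict (Set.Icc 0 ((seg p q hpq hp hq).len)))
      = volume.restrict (Set.Icc p q) := by
    have hpre : (fun r : ℝ => p + r) ⁻¹' (Set.Icc p q) = Set.Icc 0 (q - p) := by
      ext x
      simp only [Set.mem_preimage, Set.mem_Icc]
      constructor <;> intro h <;> exact ⟨by linarith [h.1], by linarith [h.2]⟩
    show Measure.map _ (volume.restrict (Set.Icc 0 (q - p))) = _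
    rw [← hpre, ← Measure.restrict_map (measurable_const_add p) measurableSet_Icc,
      (measurePreserving_add_left volume p).map_eq]
  rw [← hmap, emb.lintegral_map]

lemma shrink_contra {Gg : ℝ → ℝ≥0∞} (hfin : ∫⁻ x, Gg x ∂volume ≠ ⊤)
    {pn qn : ℕ → ℝ} {c : ℝ} (hmono : Monotone pn) (hanti : Antitone qn)
    (hc : ∀ n, pn n ≤ c ∧ c ≤ qn n)
    (hlim : ∀ x, (∀ n, pn n ≤ x ∧ x ≤ qn n) → x = c)
    (h1 : ∀ n, 1 ≤ ∫⁻ x in Set.Icc (pn n) (qn n), Gg x ∂volume) : False := by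
  set ν := volume.withDensity Gg with hν
  have hνs : ∀ s : Set ℝ, MeasurableSet s → ν s = ∫⁻ x in s, Gg x ∂volume :=
    fun s hs => withDensity_apply _ hs
  have hnm : ∀ n, ν (Set.Icc (pn n) (qn n)) ≠ ⊤ := by
    intro n
    rw [hνs _ measurableSet_Icc]
    refine ne_top_of_le_ne_top hfin ?_
    refine le_trans (lintegral_mono_set (Set.subset_univ _)) ?_
    rw [Measure.restrict_univ]
  have hAnti : Antitone fun n => Set.Icc (pn n) (qn n) :=
    fun m n h => Set.Icc_subset_Icc (hmono h) (hanti h)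
  have htend := tendsto_measure_iInter_atTop (μ := ν)
    (fun n => measurableSet_Icc.nullMeasurableSet) hAnti ⟨0, hnm 0⟩
  have hint : (⋂ n, Set.Icc (pn n) (qn n)) = {c} := by
    ext x
    simp only [Set.mem_iInter, Set.mem_Icc, Set.mem_singleton_iff]
    exact ⟨fun h => hlim x h, fun h => h ▸ hc⟩
  have hge : 1 ≤ ν (⋂ n, Set.Icc (pn n) (qn n)) := by
    refine ge_of_tendsto' htend fun n => ?_
    have := h1 n
    rw [← hνs _ measurableSet_Icc] at this
    exact this
  rw [hint, hνs _ (measurableSet_singleton c),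
    setLIntegral_measure_zero _ _ Real.volume_singleton] at hge
  exact absurd hge (by norm_num)

lemma const_of_ug {w : I13 → Y13} {g : I13 → ℝ≥0∞} (hug : IsUpperGradient w g)
    (hfin : ∫⁻ x, g x ∂μ13 ≠ ⊤) (x y : I13) : w x = w y := by
  by_contra hxy
  set W : ℝ → Y13 := fun r => w (pI r) with hW
  have hfin' : ∫⁻ x, G13 g x ∂volume ≠ ⊤ := by rw [G13_total]; exact hfin
  have key : ∀ p q : ℝ, -1 ≤ p → q ≤ 1 → p < q → W p ≠ W q →
      1 ≤ ∫⁻ x in Set.Icc p q, G13 g x ∂volume :=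
    fun p q hp hq hpq hw => ug_interval hug hp hq hpq hw
  have hWval : ∀ z : I13, W z.1 = w z := by
    intro z
    show w (pI z.1) = w z
    rw [Subtype.ext (pI_of_mem (mem13 z))]
  obtain ⟨p0, q0, hp0, hq0, hlt, hWne⟩ :
      ∃ p0 q0 : ℝ, -1 ≤ p0 ∧ q0 ≤ 1 ∧ p0 < q0 ∧ W p0 ≠ W q0 := by
    rcases lt_trichotomy (x.1 : ℝ) y.1 with h | h | h
    · exact ⟨x.1, y.1, (mem13 x).1, (mem13 y).2, h, by rw [hWval x, hWval y]; exact hxy⟩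
    · exact absurd (Subtype.ext h) (fun hh => hxy (congrArg w hh))
    · exact ⟨y.1, x.1, (mem13 y).1, (mem13 x).2, h, by rw [hWval x, hWval y]; exact (Ne.symm hxy)⟩
  set A : Set ℝ := {r : ℝ | r ∈ Set.Icc p0 q0 ∧ W r = W p0} with hA
  have hAne : p0 ∈ A := ⟨⟨le_rfl, hlt.le⟩, rfl⟩
  have hAbdd : BddAbove A := ⟨q0, fun r hr => hr.1.2⟩
  set c := sSup A with hcdef
  have hp0c : p0 ≤ c := le_csSup hAbdd hAne
  have hcq0 : c ≤ q0 := csSup_le ⟨p0, hAne⟩ fun r hr => hr.1.2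
  by_cases hWc : W c = W p0
  · have hcq : c < q0 := by
      rcases lt_or_eq_of_le hcq0 with h | h
      · exact h
      · exact absurd (h ▸ hWc) (Ne.symm hWne)
    refine shrink_contra hfin' (c := c) (pn := fun _ => c)
      (qn := fun n => c + (q0 - c)/((n:ℝ)+1)) monotone_const ?_ ?_ ?_ ?_
    · intro n m hnm
      have h1 : ((n:ℝ)+1) ≤ ((m:ℝ)+1) := by exact_mod_cast by omega
      have h2 : (q0 - c)/((m:ℝ)+1) ≤ (q0 - c)/((n:ℝ)+1) := by
        gcongr
        all_goals first | positivity | linarith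
      linarith
    · intro n
      have : (0:ℝ) < (q0 - c)/((n:ℝ)+1) := div_pos (by linarith) (by positivity)
      exact ⟨le_rfl, by linarith⟩
    · intro z hz
      by_contra hzc
      have hcz : c < z := lt_of_le_of_ne (hz 0).1 (Ne.symm hzc)
      obtain ⟨n, hn⟩ := exists_nat_ge ((q0 - c)/(z - c))
      have hzc' : (0:ℝ) < z - c := by linarith
      have h2 : q0 - c ≤ (z - c) * n := by
        rw [div_le_iff₀ hzc'] at hn
        linarith [hn]
      have h3 : (q0 - c)/((n:ℝ)+1) < z - c := by
        rw [div_lt_iff₀ (by positivity)]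
        nlinarith
      have := (hz n).2
      linarith
    · intro n
      have hδ : (0:ℝ) < (q0 - c)/((n:ℝ)+1) := div_pos (by linarith) (by positivity)
      have hδle : (q0 - c)/((n:ℝ)+1) ≤ q0 - c := by
        apply div_le_self (by linarith) (by linarith [Nat.cast_nonneg (α := ℝ) n])
      refine key c (c + (q0 - c)/((n:ℝ)+1)) (by linarith) (by linarith) (by linarith) ?_
      intro hcontra
      have hmemA : c + (q0 - c)/((n:ℝ)+1) ∈ A :=
        ⟨⟨by linarith, by linarith⟩, hcontra.symm.trans hWc⟩
      have := le_csSup hAbdd hmemA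
      rw [← hcdef] at this
      linarith
  · have hpc : p0 < c := by
      rcases lt_or_eq_of_le hp0c with h | h
      · exact h
      · exact absurd (h ▸ rfl) hWc
    refine shrink_contra hfin' (c := c) (pn := fun n => max p0 (c - 1/((n:ℝ)+1)))
      (qn := fun _ => c) ?_ antitone_const ?_ ?_ ?_
    · intro n m hnm
      have h1 : ((n:ℝ)+1) ≤ ((m:ℝ)+1) := by exact_mod_cast by omega
      have h2 : 1/((m:ℝ)+1) ≤ 1/((n:ℝ)+1) := by
        apply one_div_le_one_div_of_le (by positivity) h1
      exact max_le_max le_rfl (by linarith)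
    · intro n
      have : (0:ℝ) < 1/((n:ℝ)+1) := by positivity
      exact ⟨max_le hp0c (by linarith), le_rfl⟩
    · intro z hz
      by_contra hzc
      have hcz : z < c := lt_of_le_of_ne (hz 0).2 hzc
      obtain ⟨n, hn⟩ := exists_nat_ge (1/(c - z))
      have hzc' : (0:ℝ) < c - z := by linarith
      have h2 : 1 ≤ (c - z) * n := by
        rw [div_le_iff₀ hzc'] at hn
        linarith [hn]
      have h3 : 1/((n:ℝ)+1) < c - z := by
        rw [div_lt_iff₀ (by positivity)]
        nlinarith
      have h4 := (hz n).1
      have h5 : c - 1/((n:ℝ)+1) ≤ z := le_trans (le_max_right _ _) h4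
      linarith
    · intro n
      have hpos : (0:ℝ) < 1/((n:ℝ)+1) := by positivity
      obtain ⟨sn, hsnA, hsn⟩ := exists_lt_of_lt_csSup ⟨p0, hAne⟩
        (show c - 1/((n:ℝ)+1) < sSup A by rw [← hcdef]; linarith)
      have hsnc : sn ≤ c := le_csSup hAbdd hsnA
      have hsnne : sn ≠ c := by
        intro h
        exact hWc (h ▸ hsnA.2)
      have hsnlt : sn < c := lt_of_le_of_ne hsnc hsnne
      have hkey := key sn c (by linarith [hsnA.1.1]) (by linarith) hsnlt
        (by rw [hsnA.2]; exact Ne.symm hWc)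
      refine le_trans hkey (lintegral_mono_set ?_)
      exact Set.Icc_subset_Icc (max_le hsnA.1.1 hsn.le) le_rfl

lemma μ13_nonneg_part : μ13 {x : I13 | x.1 ∈ Set.Ici (0:ℝ)} = 1 := by
  rw [μ13_apply]
  have : Subtype.val '' {x : I13 | x.1 ∈ Set.Ici (0:ℝ)} = Set.Icc (0:ℝ) 1 := by
    ext z
    constructor
    · rintro ⟨x, hx, rfl⟩
      exact ⟨hx, (mem13 x).2⟩
    · intro hz
      exact ⟨⟨z, ⟨by linarith [hz.1], hz.2⟩⟩, hz.1, rfl⟩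
  refine (congrArg volume this).trans ?_
  rw [Real.volume_Icc]
  norm_num

lemma μ13_neg_part : μ13 {x : I13 | x.1 ∈ Set.Iio (0:ℝ)} = 1 := by
  rw [μ13_apply]
  have : Subtype.val '' {x : I13 | x.1 ∈ Set.Iio (0:ℝ)} = Set.Ico (-1:ℝ) 0 := by
    ext z
    constructor
    · rintro ⟨x, hx, rfl⟩
      exact ⟨(mem13 x).1, hx⟩
    · intro hz
      exact ⟨⟨z, ⟨hz.1, by linarith [hz.2]⟩⟩, hz.2, rfl⟩
  refine (congrArg volume this).trans ?_
  rw [Real.volume_Ico]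
  norm_num

lemma part3_13 : ¬ ∃ v : ℕ → I13 → Y13, (∀ k, MemN11 μ13 (v k)) ∧
    Tendsto (fun k => ∫⁻ x, edist (v k x) (u13 x) ∂μ13) atTop (nhds 0) := by
  rintro ⟨v, hv, htend⟩
  have hone : ∀ k, (1:ℝ≥0∞) ≤ ∫⁻ x, edist (v k x) (u13 x) ∂μ13 := by
    intro k
    obtain ⟨-, g, hgm, hug, hfin⟩ := hv k
    set x0 : I13 := ⟨0, by norm_num⟩ with hx0
    have hconst : ∀ z : I13, v k z = v k x0 :=
      fun z => const_of_ug hug hfin.ne z x0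
    set y0 : Y13 := v k x0 with hy0
    rcases memY y0 with h0 | h0
    · set S : Set I13 := {x : I13 | x.1 ∈ Set.Ici (0:ℝ)} with hS
      have hED : ∀ z, S.indicator (fun _ => (1:ℝ≥0∞)) z ≤ edist (v k z) (u13 z) := by
        intro z
        by_cases hz : z ∈ S
        · rw [Set.indicator_of_mem hz, hconst z]
          have hu : u13 z = ⟨1, by simp⟩ := by
            unfold u13
            exact if_pos hz
          rw [hu]
          refine le_of_eq (Y13.edist_of_ne ?_).symm
          intro h
          have h2 := congrArg Subtype.val h
          rw [h0] at h2
          norm_num at h2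
        · rw [Set.indicator_of_notMem hz]
          exact zero_le
      calc (1:ℝ≥0∞) = μ13 S := μ13_nonneg_part.symm
        _ = ∫⁻ z, S.indicator (fun _ => (1:ℝ≥0∞)) z ∂μ13 := by
            rw [lintegral_indicator (measSet13 measurableSet_Ici), setLIntegral_const, mul_comm,
              mul_one]
        _ ≤ ∫⁻ z, edist (v k z) (u13 z) ∂μ13 := lintegral_mono hED
    · set S : Set I13 := {x : I13 | x.1 ∈ Set.Iio (0:ℝ)} with hS
      have hED : ∀ z, S.indicator (fun _ => (1:ℝ≥0∞)) z ≤ edist (v k z) (u13 z) := by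
        intro z
        by_cases hz : z ∈ S
        · rw [Set.indicator_of_mem hz, hconst z]
          have hu : u13 z = ⟨0, by simp⟩ := by
            unfold u13
            exact if_neg (not_le.2 hz)
          rw [hu]
          refine le_of_eq (Y13.edist_of_ne ?_).symm
          intro h
          have h2 := congrArg Subtype.val h
          rw [h0] at h2
          norm_num at h2
        · rw [Set.indicator_of_notMem hz]
          exact zero_le
      calc (1:ℝ≥0∞) = μ13 S := μ13_neg_part.symm
        _ = ∫⁻ z, S.indicator (fun _ => (1:ℝ≥0∞)) z ∂μ13 := by
            rw [lintegral_indicator (measSet13 measurableSet_Iio), setLIntegral_const, mul_comm,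
              mul_one]
        _ ≤ ∫⁻ z, edist (v k z) (u13 z) ∂μ13 := lintegral_mono hED
  have := ge_of_tendsto' htend hone
  simp at this

end Part3

/-- `u = χ_{[0,1]} : [-1,1] → {0,1}` lies in `BV_AM` with strong bounding sequence
`ρ_i = i·χ_{[-1/i,0]}`, but cannot be approximated in `L¹` by `N^{1,1}` maps, so
`u ∉ BV([-1,1] : {0,1})`. -/
theorem statement13 :
    StrongBounding u13 ρ13 ∧ MemBVAM μ13 u13 ∧
      ¬ ∃ v : ℕ → I13 → Y13, (∀ k, MemN11 μ13 (v k)) ∧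
        Tendsto (fun k => ∫⁻ x, edist (v k x) (u13 x) ∂μ13) atTop (nhds 0) := by
  exact ⟨strongBounding13, memBVAM13, part3_13⟩

end BVAMPaper
end
end

section
/- Let μ be a doubling measure on X such that every singleton has measure zero, let C ≥ 1, B a ball of radius R in X, and z ∈ 4CB. Then ∫_B d(x,z)/μ(B(x,d(x,z))) dμ(x) ≤ C'' · μ(B) · R / μ(B), i.e. ∫_B d(x,z)/μ(B(x,d(x,z))) dμ(x) ≲ R, where the implicit constant depends only on C and the doubling constant of μ. -/
open MeasureTheory Filter Set Metric
open scoped ENNReal NNReal Topology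

noncomputable section

namespace BVAMPaper

variable {X : Type*} [MetricSpace X]

variable [MeasurableSpace X]

private lemma key_lintegral_bound {α : Type*} [MeasurableSpace α] (μ : Measure α) (s : Set α)
    (A : ℕ → Set α) (c : ℕ → ℝ≥0∞) (f : α → ℝ≥0∞)
    (hcover : ∀ x ∈ s, f x ≠ 0 → ∃ i, x ∈ A i)
    (hbound : ∀ i, ∀ x ∈ A i, f x ≤ c i) :
    ∫⁻ x in s, f x ∂μ ≤ ∑' i, c i * μ (A i ∩ s) := by
  rw [lintegral_def]
  refine iSup_le fun g => iSup_le fun hg => ?_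
  rw [SimpleFunc.lintegral]
  have key : ∀ a ∈ g.range, a * (μ.restrict s) (g ⁻¹' {a}) ≤
      ∑' i, c i * μ (g ⁻¹' {a} ∩ (A i ∩ s)) := by
    intro a _
    rcases eq_or_ne a 0 with rfl | ha
    · simp
    · rw [Measure.restrict_apply (g.measurableSet_fiber a)]
      have hsub : g ⁻¹' {a} ∩ s ⊆ ⋃ i, g ⁻¹' {a} ∩ (A i ∩ s) := by
        intro x hx
        have hfx : f x ≠ 0 := by
          intro h0
          have hga : g x = a := hx.1
          have hle : a ≤ f x := hga ▸ hg x
          exact ha (le_antisymm (h0 ▸ hle) zero_le)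
        obtain ⟨i, hi⟩ := hcover x hx.2 hfx
        exact Set.mem_iUnion.2 ⟨i, hx.1, hi, hx.2⟩
      calc a * μ (g ⁻¹' {a} ∩ s) ≤ a * ∑' i, μ (g ⁻¹' {a} ∩ (A i ∩ s)) :=
            mul_le_mul_right ((measure_mono hsub).trans (measure_iUnion_le _)) a
        _ = ∑' i, a * μ (g ⁻¹' {a} ∩ (A i ∩ s)) := ENNReal.tsum_mul_left.symm
        _ ≤ ∑' i, c i * μ (g ⁻¹' {a} ∩ (A i ∩ s)) := by
            refine ENNReal.tsum_le_tsum fun i => ?_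
            rcases (g ⁻¹' {a} ∩ (A i ∩ s)).eq_empty_or_nonempty with he | ⟨x, hx⟩
            · simp [he]
            · have : a ≤ c i := by
                have := hbound i x hx.2.1
                have hgx : g x = a := hx.1
                calc a = g x := hgx.symm
                  _ ≤ f x := hg x
                  _ ≤ c i := hbound i x hx.2.1
              exact mul_le_mul_left this _
  calc ∑ a ∈ g.range, a * (μ.restrict s) (g ⁻¹' {a})
      ≤ ∑ a ∈ g.range, ∑' i, c i * μ (g ⁻¹' {a} ∩ (A i ∩ s)) := Finset.sum_le_sum key
    _ = ∑' i, ∑ a ∈ g.range, c i * μ (g ⁻¹' {a} ∩ (A i ∩ s)) :=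
        (Summable.tsum_finsetSum fun _ _ => ENNReal.summable).symm
    _ ≤ ∑' i, c i * μ (A i ∩ s) := by
        refine ENNReal.tsum_le_tsum fun i => ?_
        rw [← Finset.mul_sum]
        refine mul_le_mul_right ?_ _
        have : ∀ a ∈ g.range, μ (g ⁻¹' {a} ∩ (A i ∩ s)) = (μ.restrict (A i ∩ s)) (g ⁻¹' {a}) :=
          fun a _ => (Measure.restrict_apply (g.measurableSet_fiber a)).symm
        rw [Finset.sum_congr rfl this,
          ← measure_biUnion_finset ((pairwiseDisjoint_fiber g univ).subset (subset_univ _))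
            (fun a _ => g.measurableSet_fiber a)]
        calc (μ.restrict (A i ∩ s)) (⋃ a ∈ g.range, g ⁻¹' {a})
            ≤ (μ.restrict (A i ∩ s)) univ := measure_mono (subset_univ _)
          _ = μ (A i ∩ s) := by rw [Measure.restrict_apply MeasurableSet.univ, univ_inter]

/-- Riesz-potential estimate: for a doubling measure vanishing on singletons,
`∫_B d(x,z)/μ(B(x,d(x,z))) dμ(x) ≲ R` for any `z ∈ 4CB`, with implicit constant
depending only on `C` and the doubling constant. -/
theorem statement16 (Cd C : ℝ≥0) (hC : 1 ≤ C) :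
    ∃ C'' : ℝ≥0, ∀ (X : Type) [MetricSpace X] [MeasurableSpace X] (μ : Measure X),
      Doubling μ Cd → (∀ w : X, μ {w} = 0) →
      ∀ (x₀ z : X) (R : ℝ), 0 < R → z ∈ ball x₀ (4 * C * R) →
        ∫⁻ x in ball x₀ R, edist x z / μ (ball x (dist x z)) ∂μ ≤
          C'' * ENNReal.ofReal R := by
  refine ⟨10 * C * Cd ^ 3, ?_⟩
  intro X _ _ μ hD _hsing x₀ z R hR hz
  have hC0 : (0:ℝ) < (C:ℝ) := lt_of_lt_of_le one_pos hC
  have hCd0 : (Cd : ℝ≥0∞) ≠ 0 := by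
    intro h
    have h1 := (hD x₀ R hR).1
    have h2 := (hD x₀ R hR).2.1
    have h3 : μ (ball x₀ R) ≤ μ (ball x₀ (2 * R)) :=
      measure_mono (ball_subset_ball (by linarith))
    rw [h] at h2
    simp only [zero_mul, le_zero_iff] at h2
    exact (h3.trans_eq h2).not_gt h1
  -- radii
  set r : ℕ → ℝ := fun i => 5 * C * R * (1/2) ^ (i+1) with hrdef
  have hrpos : ∀ i, 0 < r i := fun i => by positivity
  have hr2 : ∀ i, 2 * r i = 5 * C * R * (1/2) ^ i := fun i => by
    simp only [hrdef]; ring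
  set A : ℕ → Set X := fun i => {x | r i ≤ dist x z ∧ dist x z < 2 * r i} with hAdef
  set c : ℕ → ℝ≥0∞ := fun i =>
    ENNReal.ofReal (2 * r i) * (Cd:ℝ≥0∞)^2 / μ (ball z (r i)) with hcdef
  set f : X → ℝ≥0∞ := fun x => edist x z / μ (ball x (dist x z)) with hfdef
  -- cover
  have hcover : ∀ x ∈ ball x₀ R, f x ≠ 0 → ∃ i, x ∈ A i := by
    intro x hx hfx
    have hxz : 0 < dist x z := by
      rcases eq_or_ne (edist x z) 0 with h | h
      · exact absurd (by simp [hfdef, h, ENNReal.zero_div]) hfx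
      · exact dist_pos.2 (fun he => h (by simp [he]))
    have hlt : dist x z < 5 * C * R := by
      have h1 : dist x z ≤ dist x x₀ + dist x₀ z := dist_triangle x x₀ z
      have h2 : dist x x₀ < R := mem_ball.1 hx
      have h3 : dist x₀ z < 4 * C * R := by
        rw [dist_comm]; exact mem_ball.1 hz
      have hRC : R ≤ C * R := le_mul_of_one_le_left hR.le (by exact_mod_cast hC)
      nlinarith
    have hex : ∃ n, r n ≤ dist x z := by
      obtain ⟨n, hn⟩ := exists_pow_lt_of_lt_one (div_pos hxz (by positivity) :
        (0:ℝ) < dist x z / (5 * C * R)) (by norm_num : (1/2:ℝ) < 1)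
      refine ⟨n, le_of_lt ?_⟩
      have h5 : (0:ℝ) < 5 * C * R := by positivity
      calc r n = 5 * C * R * (1/2)^(n+1) := rfl
        _ ≤ 5 * C * R * (1/2)^n := by
            apply mul_le_mul_of_nonneg_left _ h5.le
            apply pow_le_pow_of_le_one (by norm_num) (by norm_num)
            omega
        _ < 5 * C * R * (dist x z / (5 * C * R)) :=
            mul_lt_mul_of_pos_left hn h5
        _ = dist x z := by field_simp
    classical
    refine ⟨Nat.find hex, Nat.find_spec hex, ?_⟩
    rcases Nat.eq_zero_or_eq_succ_pred (Nat.find hex) with h0 | hsucc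
    · rw [h0, hr2]
      simpa using hlt
    · have hlt' := Nat.find_min hex (m := Nat.find hex - 1) (by omega)
      push_neg at hlt'
      have hk : Nat.find hex - 1 + 1 = Nat.find hex := by omega
      have : 2 * r (Nat.find hex) = r (Nat.find hex - 1) := by
        calc 2 * r (Nat.find hex) = 5 * C * R * (1/2) ^ (Nat.find hex) := hr2 _
          _ = 5 * C * R * (1/2) ^ (Nat.find hex - 1 + 1) := by rw [hk]
          _ = r (Nat.find hex - 1) := rfl
      rw [this]
      exact hlt'
  -- bound on annuli
  have hbound : ∀ i, ∀ x ∈ A i, f x ≤ c i := by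
    intro i x hx
    obtain ⟨hd1, hd2⟩ := hx
    have hri := hrpos i
    set B := μ (ball x (dist x z)) with hBdef
    set m := μ (ball z (r i)) with hmdef
    have hm0 : m ≠ 0 := (hD z (r i) hri).1.ne'
    have hmtop : m ≠ ∞ := by
      refine (lt_of_le_of_lt ?_ (hD z (r i) hri).2.2).ne
      exact measure_mono (ball_subset_ball (by linarith))
    have hB0 : B ≠ 0 := by
      refine ((hD x (r i) hri).1.trans_le ?_).ne'
      exact measure_mono (ball_subset_ball hd1)
    have hBtop : B ≠ ∞ := by
      refine (lt_of_le_of_lt ?_ (hD x (r i) hri).2.2).ne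
      exact measure_mono (ball_subset_ball hd2.le)
    have hchain : m ≤ (Cd:ℝ≥0∞)^2 * B := by
      have h1 : m ≤ μ (ball x (4 * r i)) := by
        apply measure_mono
        intro y hy
        have : dist y z < r i := mem_ball.1 hy
        have hzx : dist z x < 2 * r i := by rw [dist_comm]; exact hd2
        have : dist y x < 3 * r i := by
          have := dist_triangle y z x
          linarith
        exact mem_ball.2 (by linarith)
      have h2 : μ (ball x (4 * r i)) ≤ Cd * μ (ball x (2 * r i)) := by
        have := (hD x (2 * r i) (by linarith)).2.1
        rwa [show 2 * (2 * r i) = 4 * r i by ring] at this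
      have h3 : μ (ball x (2 * r i)) ≤ Cd * μ (ball x (r i)) := (hD x (r i) hri).2.1
      have h4 : μ (ball x (r i)) ≤ B := measure_mono (ball_subset_ball hd1)
      calc m ≤ Cd * μ (ball x (2 * r i)) := h1.trans h2
        _ ≤ Cd * (Cd * μ (ball x (r i))) := mul_le_mul_right h3 _
        _ = (Cd:ℝ≥0∞)^2 * μ (ball x (r i)) := by ring
        _ ≤ (Cd:ℝ≥0∞)^2 * B := mul_le_mul_right h4 _
    have hinv : B⁻¹ ≤ (Cd:ℝ≥0∞)^2 / m := by
      rw [ENNReal.le_div_iff_mul_le (Or.inl hm0) (Or.inl hmtop)]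
      calc B⁻¹ * m ≤ B⁻¹ * ((Cd:ℝ≥0∞)^2 * B) := mul_le_mul_right hchain _
        _ = (Cd:ℝ≥0∞)^2 * (B⁻¹ * B) := by ring
        _ = (Cd:ℝ≥0∞)^2 := by rw [ENNReal.inv_mul_cancel hB0 hBtop, mul_one]
    calc f x = edist x z * B⁻¹ := by rw [hfdef]; simp [div_eq_mul_inv, hBdef]
      _ ≤ ENNReal.ofReal (2 * r i) * ((Cd:ℝ≥0∞)^2 / m) := by
          apply mul_le_mul'
          · rw [edist_dist]; exact ENNReal.ofReal_le_ofReal hd2.le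
          · exact hinv
      _ = c i := by rw [hcdef]; simp [mul_div_assoc, hmdef]
  refine (key_lintegral_bound μ (ball x₀ R) A c f hcover hbound).trans ?_
  -- sum the series
  have hterm : ∀ i, c i * μ (A i ∩ ball x₀ R) ≤
      (Cd:ℝ≥0∞)^3 * ENNReal.ofReal (2 * r i) := by
    intro i
    have hri := hrpos i
    set m := μ (ball z (r i)) with hmdef
    have hm0 : m ≠ 0 := (hD z (r i) hri).1.ne'
    have hmtop : m ≠ ∞ := by
      refine (lt_of_le_of_lt ?_ (hD z (r i) hri).2.2).ne
      exact measure_mono (ball_subset_ball (by linarith))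
    have hA2 : μ (A i ∩ ball x₀ R) ≤ Cd * m := by
      refine le_trans (measure_mono ?_) (hD z (r i) hri).2.1
      intro x hx
      exact mem_ball.2 hx.1.2
    calc c i * μ (A i ∩ ball x₀ R) ≤ c i * (Cd * m) := mul_le_mul_right hA2 _
      _ = ENNReal.ofReal (2 * r i) * (Cd:ℝ≥0∞)^2 * m⁻¹ * (Cd * m) := by
          rw [hcdef]; simp [div_eq_mul_inv, hmdef]
      _ = (Cd:ℝ≥0∞)^3 * ENNReal.ofReal (2 * r i) * (m⁻¹ * m) := by ring
      _ = (Cd:ℝ≥0∞)^3 * ENNReal.ofReal (2 * r i) := by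
          rw [ENNReal.inv_mul_cancel hm0 hmtop, mul_one]
  refine (ENNReal.tsum_le_tsum hterm).trans ?_
  rw [ENNReal.tsum_mul_left]
  have hsum : ∑' i, ENNReal.ofReal (2 * r i) = ENNReal.ofReal (5 * C * R) * 2 := by
    have : ∀ i, ENNReal.ofReal (2 * r i) =
        ENNReal.ofReal (5 * C * R) * (2⁻¹ : ℝ≥0∞) ^ i := by
      intro i
      rw [hr2, ENNReal.ofReal_mul (by positivity), ENNReal.ofReal_pow (by norm_num : (0:ℝ) ≤ 1/2)]
      congr 2
      rw [one_div, ENNReal.ofReal_inv_of_pos two_pos, ENNReal.ofReal_ofNat]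
    rw [tsum_congr this, ENNReal.tsum_mul_left, ENNReal.tsum_geometric,
      ENNReal.one_sub_inv_two, inv_inv]
  rw [hsum]
  have hof : ENNReal.ofReal (5 * (C:ℝ) * R) = 5 * (C:ℝ≥0∞) * ENNReal.ofReal R := by
    rw [ENNReal.ofReal_mul (by positivity), ENNReal.ofReal_mul (by positivity),
      ENNReal.ofReal_ofNat, ENNReal.ofReal_coe_nnreal]
  rw [hof]
  refine le_of_eq ?_
  push_cast
  ring


end BVAMPaper
end
end
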